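/- Let ψ_1, …, ψ_m be finite simple graphs, each of which is positive (pruned, with every connected component of order at least 1). Then for every integer r, there are only finitely many isomorphism classes of finite simple graphs of order less than r that can be written as a union of subgraphs each isomorphic to some ψ_i. -/

import Mathlib

open scoped Classical

/-- The number of injective graph homomorphisms from `G` to `H`. -/
noncomputable def numInj {α β : Type*} (G : SimpleGraph α) (H : SimpleGraph β) : ℕ :=
  Nat.card {f : G →g H // Function.Injective f}

/-- There exists an injective graph homomorphism from `G` to `H`. -/
def Injects {α β : Type*} (G : SimpleGraph α) (H : SimpleGraph β) : Prop :=
  ∃ f : G →g H, Function.Injective f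

/-- The order of a finite simple graph: `#E - #V`. -/
noncomputable def gOrd {α : Type*} (G : SimpleGraph α) : ℤ :=
  (Nat.card G.edgeSet : ℤ) - (Nat.card α : ℤ)

/-- The order of a subgraph: `#E - #V`. -/
noncomputable def subOrd {α : Type*} {G : SimpleGraph α} (H : G.Subgraph) : ℤ :=
  (Nat.card H.edgeSet : ℤ) - (Nat.card H.verts : ℤ)

/-- A simple graph is pruned if every vertex has degree at least 2. -/
def PrunedS {α : Type*} (G : SimpleGraph α) : Prop :=
  ∀ v : α, 2 ≤ Nat.card (G.neighborSet v)

/-- The order of a connected component: the number of edges with both endpoints in the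
component minus the number of vertices of the component. -/
noncomputable def compOrd {α : Type*} (G : SimpleGraph α) (c : G.ConnectedComponent) : ℤ :=
  (Nat.card {e : G.edgeSet // ∀ v ∈ (e : Sym2 α), G.connectedComponentMk v = c} : ℤ)
    - (Nat.card {v : α // G.connectedComponentMk v = c} : ℤ)

/-- A simple graph is positive if it is pruned and each connected component has
order at least 1. -/
def PositiveS {α : Type*} (G : SimpleGraph α) : Prop :=
  PrunedS G ∧ ∀ c : G.ConnectedComponent, 1 ≤ compOrd G c

/-- `S` lies in `Ψ⁺`: it can be written as a union of subgraphs, each isomorphic to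
some `ψ i` (the union covering all vertices and edges of `S`). -/
def IsUnionOfCopies {m : ℕ} {β : Fin m → Type*} (ψ : ∀ i, SimpleGraph (β i))
    {γ : Type*} (S : SimpleGraph γ) : Prop :=
  ∃ F : Set S.Subgraph, F.Nonempty ∧
    (∀ H ∈ F, ∃ i, Nonempty ((ψ i) ≃g H.coe)) ∧
    (∀ v : γ, ∃ H ∈ F, v ∈ H.verts) ∧
    (∀ e ∈ S.edgeSet, ∃ H ∈ F, e ∈ H.edgeSet)

/-- The `Ψ`-image of `G`: the union of all subgraphs of `G` isomorphic to some `ψ i`. -/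
noncomputable def PsiImage {m : ℕ} {β : Fin m → Type*} (ψ : ∀ i, SimpleGraph (β i))
    {γ : Type*} (G : SimpleGraph γ) : G.Subgraph :=
  sSup {H : G.Subgraph | ∃ i, Nonempty ((ψ i) ≃g H.coe)}


section AuxStatement13
open Finset SimpleGraph

variable {V : Type*}

private lemma natcard_neighborSet_eq_degree [Fintype V] (G : SimpleGraph V) (v : V) :
    Nat.card (G.neighborSet v) = G.degree v := by
  rw [Nat.card_eq_fintype_card]
  exact G.card_neighborSet_eq_degree v

private lemma subgraph_degree_le [Fintype V] {S : SimpleGraph V} (H : S.Subgraph)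
    (x : H.verts) : Nat.card (H.coe.neighborSet x) ≤ S.degree (x : V) := by
  rw [← natcard_neighborSet_eq_degree]
  have hmem : ∀ y : H.coe.neighborSet x, ((y : H.verts) : V) ∈ S.neighborSet (x : V) :=
    fun y => H.adj_sub y.2
  exact Nat.card_le_card_of_injective
    (fun y => (⟨((y : H.verts) : V), hmem y⟩ : S.neighborSet (x : V)))
    (by
      intro a b hab
      have := congrArg Subtype.val hab
      exact Subtype.ext (Subtype.ext this))

private lemma two_mul_card_le_sum_degrees [Fintype V] (G : SimpleGraph V)
    (W : Finset V) (E' : Finset (Sym2 V)) (hE : E' ⊆ G.edgeFinset)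
    (hW : ∀ e ∈ E', ∀ x ∈ e, x ∈ W) :
    2 * E'.card ≤ ∑ w ∈ W, G.degree w := by
  have key : ∀ e ∈ E', (W.filter (fun w => w ∈ e)).card = 2 := by
    intro e he
    induction e using Sym2.ind with
    | _ a b =>
      have hadj : G.Adj a b := by
        have := hE he
        rw [mem_edgeFinset, mem_edgeSet] at this
        exact this
      have ha : a ∈ W := hW _ he a (by simp)
      have hb : b ∈ W := hW _ he b (by simp)
      have hfil : W.filter (fun w => w ∈ s(a, b)) = {a, b} := by
        ext x
        simp only [mem_filter, Sym2.mem_iff, mem_insert, mem_singleton]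
        constructor
        · rintro ⟨-, h⟩; exact h
        · rintro (rfl | rfl) <;> simp [ha, hb]
      rw [hfil, card_pair hadj.ne]
  calc 2 * E'.card = ∑ _e ∈ E', 2 := by rw [sum_const, smul_eq_mul, mul_comm]
    _ = ∑ e ∈ E', (W.filter (fun w => w ∈ e)).card := (sum_congr rfl key).symm
    _ = ∑ e ∈ E', ∑ w ∈ W, if w ∈ e then 1 else 0 := sum_congr rfl fun e _ => card_filter _ _
    _ = ∑ w ∈ W, ∑ e ∈ E', if w ∈ e then 1 else 0 := sum_comm
    _ ≤ ∑ w ∈ W, G.degree w := by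
        refine sum_le_sum fun w _ => ?_
        rw [← card_filter]
        rw [← G.card_incidenceFinset_eq_degree w]
        refine card_le_card fun e he' => ?_
        rw [mem_filter] at he'
        rw [mem_incidenceFinset]
        exact ⟨mem_edgeFinset.mp (hE he'.1), he'.2⟩

private lemma exists_degree_three [Fintype V] (G : SimpleGraph V)
    (c : G.ConnectedComponent) (hc : 1 ≤ compOrd G c) :
    ∃ w : V, G.connectedComponentMk w = c ∧ 3 ≤ G.degree w := by
  by_contra hcon
  push_neg at hcon
  set W : Finset V := Finset.univ.filter (fun v => G.connectedComponentMk v = c) with hWdef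
  set E' : Finset (Sym2 V) :=
    G.edgeFinset.filter (fun e => ∀ x ∈ e, G.connectedComponentMk x = c) with hEdef
  have hcardV : Nat.card {v : V // G.connectedComponentMk v = c} = W.card := by
    rw [Nat.card_eq_fintype_card, Fintype.card_subtype]
  have hcardE : Nat.card {e : G.edgeSet // ∀ v ∈ (e : Sym2 V), G.connectedComponentMk v = c}
      = E'.card := by
    rw [Nat.card_congr (Equiv.subtypeSubtypeEquivSubtypeInter
      (fun e => e ∈ G.edgeSet) (fun e => ∀ v ∈ e, G.connectedComponentMk v = c)),
      Nat.card_eq_fintype_card, Fintype.card_subtype]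
    congr 1
    ext e
    simp [hEdef, mem_edgeFinset, and_comm]
  have hlt : W.card < E'.card := by
    unfold compOrd at hc
    rw [hcardV, hcardE] at hc
    omega
  have hdc := two_mul_card_le_sum_degrees G W E' (filter_subset _ _)
    (by
      intro e he x hx
      rw [hEdef, mem_filter] at he
      rw [hWdef, mem_filter]
      exact ⟨mem_univ x, he.2 x hx⟩)
  have hub : ∑ w ∈ W, G.degree w ≤ 2 * W.card := by
    calc ∑ w ∈ W, G.degree w ≤ ∑ _w ∈ W, 2 := by
          refine sum_le_sum fun w hw => ?_
          rw [hWdef, mem_filter] at hw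
          have := hcon w hw.2
          omega
      _ = 2 * W.card := by rw [sum_const, smul_eq_mul, mul_comm]
  omega

private lemma ball_card_le [Fintype V] (G : SimpleGraph V) (D : ℕ)
    (hD : ∀ v, G.degree v ≤ D) (w : V) : ∀ k : ℕ,
    (Finset.univ.filter fun x => ∃ p : G.Walk x w, p.length ≤ k).card ≤ (D + 1) ^ k := by
  intro k
  induction k with
  | zero =>
    have hsub : (Finset.univ.filter fun x => ∃ p : G.Walk x w, p.length ≤ 0) ⊆ {w} := by
      intro x hx
      rw [mem_filter] at hx
      obtain ⟨-, p, hp⟩ := hx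
      cases p with
      | nil => exact mem_singleton_self w
      | cons h q => simp [SimpleGraph.Walk.length_cons] at hp
    simpa using card_le_card hsub
  | succ k ih =>
    have hsub : (Finset.univ.filter fun x => ∃ p : G.Walk x w, p.length ≤ k + 1) ⊆
        (Finset.univ.filter fun x => ∃ p : G.Walk x w, p.length ≤ k) ∪
        (Finset.univ.filter fun x => ∃ p : G.Walk x w, p.length ≤ k).biUnion
          (fun y => G.neighborFinset y) := by
      intro x hx
      simp only [mem_filter, mem_union, mem_biUnion, mem_univ, true_and] at hx ⊢
      obtain ⟨p, hp⟩ := hx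
      cases p with
      | nil => exact Or.inl ⟨SimpleGraph.Walk.nil, by simp⟩
      | @cons _ y _ h q =>
        refine Or.inr ⟨y, ⟨q, ?_⟩, ?_⟩
        · simpa [SimpleGraph.Walk.length_cons] using hp
        · rw [mem_neighborFinset]; exact h.symm
    calc (Finset.univ.filter fun x => ∃ p : G.Walk x w, p.length ≤ k + 1).card
        ≤ _ := card_le_card hsub
      _ ≤ (Finset.univ.filter fun x => ∃ p : G.Walk x w, p.length ≤ k).card +
          ((Finset.univ.filter fun x => ∃ p : G.Walk x w, p.length ≤ k).biUnion
            (fun y => G.neighborFinset y)).card := card_union_le _ _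
      _ ≤ (Finset.univ.filter fun x => ∃ p : G.Walk x w, p.length ≤ k).card +
          ∑ y ∈ (Finset.univ.filter fun x => ∃ p : G.Walk x w, p.length ≤ k),
            (G.neighborFinset y).card := by
          exact Nat.add_le_add_left (card_biUnion_le) _
      _ ≤ (Finset.univ.filter fun x => ∃ p : G.Walk x w, p.length ≤ k).card +
          (Finset.univ.filter fun x => ∃ p : G.Walk x w, p.length ≤ k).card * D := by
          refine Nat.add_le_add_left ?_ _
          calc ∑ y ∈ _, (G.neighborFinset y).card ≤ ∑ _y ∈ (Finset.univ.filter
                fun x => ∃ p : G.Walk x w, p.length ≤ k), D :=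
              sum_le_sum fun y _ => hD y
            _ = _ := by rw [sum_const, smul_eq_mul]
      _ = (Finset.univ.filter fun x => ∃ p : G.Walk x w, p.length ≤ k).card * (D + 1) := by ring
      _ ≤ (D + 1) ^ k * (D + 1) := Nat.mul_le_mul_right _ ih
      _ = (D + 1) ^ (k + 1) := (pow_succ _ _).symm

end AuxStatement13

theorem finitely_many_isoClasses_of_unions {m : ℕ} {β : Fin m → Type*}
    [∀ i, Fintype (β i)] (ψ : ∀ i, SimpleGraph (β i))
    (hpos : ∀ i, PositiveS (ψ i)) (r : ℤ) :
    ∃ L : List (Σ n : ℕ, SimpleGraph (Fin n)),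
      ∀ (γ : Type*) [Fintype γ], ∀ S : SimpleGraph γ,
        IsUnionOfCopies ψ S → gOrd S < r → ∃ p ∈ L, Nonempty (S ≃g p.2) := by
  classical
  set b : ℕ := Finset.univ.sup (fun i : Fin m => Fintype.card (β i)) with hb
  set R : ℕ := r.toNat with hR
  set N : ℕ := 2 * R * (2 * R + 1) ^ b with hN
  refine ⟨(List.range (N + 1)).flatMap
    (fun n => ((Finset.univ : Finset (SimpleGraph (Fin n))).toList).map (Sigma.mk n)), ?_⟩
  intro γ _ S hS hord
  have hcard : Fintype.card γ ≤ N := by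
    obtain ⟨F, hFne, hiso, hvert, hedge⟩ := hS
    have claimA : ∀ v : γ, 2 ≤ S.degree v := by
      intro v
      obtain ⟨H, hHF, hv⟩ := hvert v
      obtain ⟨i, ⟨e⟩⟩ := hiso H hHF
      calc 2 ≤ Nat.card ((ψ i).neighborSet (e.symm ⟨v, hv⟩)) := (hpos i).1 _
        _ = Nat.card (H.coe.neighborSet (e (e.symm ⟨v, hv⟩))) :=
            Nat.card_congr (e.mapNeighborSet _)
        _ = Nat.card (H.coe.neighborSet ⟨v, hv⟩) := by rw [e.apply_symm_apply]
        _ ≤ S.degree v := subgraph_degree_le H ⟨v, hv⟩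
    have claimB : ∀ v : γ, ∃ w : γ, 3 ≤ S.degree w ∧ ∃ p : S.Walk v w, p.length ≤ b := by
      intro v
      obtain ⟨H, hHF, hv⟩ := hvert v
      obtain ⟨i, ⟨e⟩⟩ := hiso H hHF
      set u : β i := e.symm ⟨v, hv⟩ with hu
      obtain ⟨w', hw'c, hw'3⟩ := exists_degree_three (ψ i) ((ψ i).connectedComponentMk u)
        ((hpos i).2 _)
      have hreach : (ψ i).Reachable u w' :=
        (SimpleGraph.ConnectedComponent.eq.mp hw'c).symm
      obtain ⟨p0⟩ := hreach
      have hlen : p0.bypass.length ≤ b := by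
        have h1 : p0.bypass.length < Fintype.card (β i) := p0.bypass_isPath.length_lt
        have h2 : Fintype.card (β i) ≤ b := by
          rw [hb]; exact Finset.le_sup (f := fun j : Fin m => Fintype.card (β j)) (Finset.mem_univ i)
        omega
      have h3 : ((e u : H.verts) : γ) = v := by rw [hu, e.apply_symm_apply]
      refine ⟨((e w' : H.verts) : γ), ?_, ?_⟩
      · calc 3 ≤ (ψ i).degree w' := hw'3
          _ = Nat.card ((ψ i).neighborSet w') := (natcard_neighborSet_eq_degree _ _).symm
          _ = Nat.card (H.coe.neighborSet (e w')) := Nat.card_congr (e.mapNeighborSet _)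
          _ ≤ S.degree _ := subgraph_degree_le H _
      · refine ⟨((p0.bypass.map e.toHom).map H.hom).copy h3 rfl, ?_⟩
        exact (SimpleGraph.Walk.length_copy _ _ _).trans_le ((SimpleGraph.Walk.length_map _ _).trans_le
          ((SimpleGraph.Walk.length_map _ _).trans_le hlen))
    set En := S.edgeFinset.card with hEn
    have hsum : ∑ v : γ, S.degree v = 2 * En := S.sum_degrees_eq_twice_card_edges
    set V3 : Finset γ := Finset.univ.filter (fun v => 3 ≤ S.degree v) with hV3
    have hlower : 2 * Fintype.card γ + V3.card ≤ 2 * En := by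
      have e1 : ∑ v : γ, (if 3 ≤ S.degree v then (3 : ℕ) else 2)
          = 2 * Fintype.card γ + V3.card := by
        have hsplit : ∀ v : γ, (if 3 ≤ S.degree v then (3 : ℕ) else 2)
            = 2 + (if 3 ≤ S.degree v then 1 else 0) := fun v => by split <;> rfl
        simp_rw [hsplit]
        rw [Finset.sum_add_distrib, Finset.sum_const, ← Finset.card_filter, ← hV3,
          smul_eq_mul, Finset.card_univ, mul_comm]
      have e2 : ∑ v : γ, (if 3 ≤ S.degree v then (3 : ℕ) else 2) ≤ ∑ v : γ, S.degree v := by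
        refine Finset.sum_le_sum fun v _ => ?_
        have := claimA v
        split <;> omega
      omega
    have hEnV : En < Fintype.card γ + R := by
      have h0 : gOrd S = (En : ℤ) - (Fintype.card γ : ℤ) := by
        unfold gOrd
        rw [Nat.card_eq_fintype_card, Nat.card_eq_fintype_card, hEn,
          SimpleGraph.edgeFinset_card]
      have h1 : (En : ℤ) - (Fintype.card γ : ℤ) < (R : ℤ) :=
        lt_of_lt_of_le (h0 ▸ hord) (by rw [hR]; exact Int.self_le_toNat r)
      omega
    have hdegB : ∀ x : γ, S.degree x ≤ 2 * R := by
      intro x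
      have h3 : S.degree x + ∑ v ∈ Finset.univ.erase x, S.degree v = ∑ v : γ, S.degree v :=
        Finset.add_sum_erase Finset.univ (fun v => S.degree v) (Finset.mem_univ x)
      have h2 : (Finset.univ.erase x).card * 2 ≤ ∑ v ∈ Finset.univ.erase x, S.degree v := by
        have := Finset.card_nsmul_le_sum (Finset.univ.erase x) (fun v => S.degree v) 2
          (fun v _ => claimA v)
        simpa using this
      rw [Finset.card_erase_of_mem (Finset.mem_univ x), Finset.card_univ] at h2
      have hγpos : 1 ≤ Fintype.card γ := Fintype.card_pos_iff.mpr ⟨x⟩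
      omega
    have hcover : (Finset.univ : Finset γ) ⊆ V3.biUnion
        (fun w => Finset.univ.filter (fun x => ∃ p : S.Walk x w, p.length ≤ b)) := by
      intro v _
      obtain ⟨w, hw3, p, hp⟩ := claimB v
      exact Finset.mem_biUnion.mpr ⟨w, by rw [hV3, Finset.mem_filter]; exact ⟨Finset.mem_univ _, hw3⟩,
        by rw [Finset.mem_filter]; exact ⟨Finset.mem_univ _, p, hp⟩⟩
    have hmain : Fintype.card γ ≤ V3.card * (2 * R + 1) ^ b := by
      calc Fintype.card γ = (Finset.univ : Finset γ).card := (Finset.card_univ).symm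
        _ ≤ _ := Finset.card_le_card hcover
        _ ≤ ∑ w ∈ V3, (Finset.univ.filter
            (fun x => ∃ p : S.Walk x w, p.length ≤ b)).card := Finset.card_biUnion_le
        _ ≤ ∑ _w ∈ V3, (2 * R + 1) ^ b :=
            Finset.sum_le_sum (fun w _ => ball_card_le S (2 * R) hdegB w b)
        _ = V3.card * (2 * R + 1) ^ b := by rw [Finset.sum_const, smul_eq_mul]
    have hV3card : V3.card ≤ 2 * R := by omega
    calc Fintype.card γ ≤ V3.card * (2 * R + 1) ^ b := hmain
      _ ≤ 2 * R * (2 * R + 1) ^ b := Nat.mul_le_mul_right _ hV3card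
      _ = N := by rw [hN]
  set n := Fintype.card γ with hn
  set e := Fintype.equivFin γ with he
  refine ⟨⟨n, S.map e.toEmbedding⟩, ?_, ⟨⟨e, ?_⟩⟩⟩
  · rw [List.mem_flatMap]
    exact ⟨n, List.mem_range.mpr (by omega), List.mem_map.mpr
      ⟨S.map e.toEmbedding, Finset.mem_toList.mpr (Finset.mem_univ _), rfl⟩⟩
  · intro a b
    simp only [SimpleGraph.map_adj, Equiv.coe_toEmbedding]
    constructor
    · rintro ⟨-, x, y, hxy, hx, hy⟩
      rwa [e.injective hx, e.injective hy] at hxy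
    · intro h
      exact ⟨e.injective.ne h.ne, a, b, h, rfl, rfl⟩
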